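/- arXiv:1201.0658 — 2 statements merged into one kernel-verified Lean document; each statement's English description precedes it below -/
import Mathlib

section
/- For w(x) = x(1 + L(log x)) for x ≥ 1 (where L is the Lambert W function, L(x)e^{L(x)} = x), one has w(W⁻¹(y)) / w(W⁻¹(y+α)) ∼ e^{-α}/y^α as y → ∞, for every α > 0. Consequently α_c(w) = 1. -/
open MeasureTheory Filter Topology Set
open scoped ENNReal NNReal

noncomputable section

/-- Extension of a weight sequence to the reals: `w(t) = w(⌊t⌋)` (and `w 0` for `t < 0`). -/
def wext (w : ℕ → ℝ) (t : ℝ) : ℝ := w ⌊t⌋₊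

/-- `W(t) = ∫₀ᵗ du / w(u)`. -/
def Wfun (v : ℝ → ℝ) (t : ℝ) : ℝ := ∫ u in (0:ℝ)..t, (v u)⁻¹

/-- `I_α(w) = ∫₀^∞ dx / w(W⁻¹(W(x)+α))`, valued in `[0,∞]`. -/
def Ia (v : ℝ → ℝ) (Winv : ℝ → ℝ) (α : ℝ) : ℝ≥0∞ :=
  ∫⁻ x in Ioi (0:ℝ), ENNReal.ofReal (v (Winv (Wfun v x + α)))⁻¹

/-- The critical parameter `α_c(w) = inf {α ≥ 0 : I_α(w) < ∞} ∈ [0,∞]` (inf ∅ = ∞). -/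
def alphac (v : ℝ → ℝ) (Winv : ℝ → ℝ) : ℝ≥0∞ :=
  sInf (ENNReal.ofReal '' {α : ℝ | 0 < α ∧ Ia v Winv α < ⊤})

set_option linter.unusedSectionVars false
set_option maxHeartbeats 1000000


lemma lintegral_image_eq_lintegral_abs_deriv_mul {s : Set ℝ} {f f' : ℝ → ℝ}
    (hs : MeasurableSet s)
    (hf' : ∀ x ∈ s, HasDerivWithinAt f (f' x) s x) (hf : InjOn f s) (g : ℝ → ℝ≥0∞) :
    ∫⁻ x in f '' s, g x = ∫⁻ x in s, ENNReal.ofReal |f' x| * g (f x) := by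
  simpa only [ContinuousLinearMap.det_toSpanSingleton] using
    MeasureTheory.lintegral_image_eq_lintegral_abs_det_fderiv_mul volume hs
      (fun x hx => (hf' x hx).hasFDerivWithinAt) hf g

section L
variable (L : ℝ → ℝ)
    (hL : ∀ x : ℝ, 0 ≤ x → L x * Real.exp (L x) = x)
    (hL' : ∀ x : ℝ, 0 ≤ x → L (x * Real.exp x) = x)
    (hLnonneg : ∀ x : ℝ, 0 ≤ x → 0 ≤ L x)

include hL hL' hLnonneg

lemma L0 : L 0 = 0 := by
  have := hL' 0 le_rfl; simpa using this

lemma Lsmono : StrictMonoOn L (Ici (0:ℝ)) := by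
  intro x hx y hy hxy
  by_contra h
  push_neg at h
  have hg : L y * Real.exp (L y) ≤ L x * Real.exp (L x) :=
    mul_le_mul h (Real.exp_le_exp.2 h) (Real.exp_pos _).le (hLnonneg x hx)
  rw [hL x hx, hL y hy] at hg
  linarith

lemma Lpos {x : ℝ} (hx : 0 < x) : 0 < L x := by
  rcases lt_or_eq_of_le (hLnonneg x hx.le) with h | h
  · exact h
  · exfalso; have := hL x hx.le; rw [← h] at this; simp at this; linarith

lemma Lcont : ContinuousOn L (Ici (0:ℝ)) := by
  intro a ha
  rcases eq_or_lt_of_le (mem_Ici.1 ha : (0:ℝ) ≤ a) with rfl | ha'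
  · -- continuity within Ici 0 at 0
    have : ContinuousWithinAt L (Ici (0:ℝ)) 0 := by
      apply StrictMonoOn.continuousWithinAt_right_of_surjOn (Lsmono L hL hL' hLnonneg)
        (self_mem_nhdsWithin)
      intro b hb
      have hb' : (0:ℝ) < b := by simpa [L0 L hL hL' hLnonneg] using hb
      exact ⟨b * Real.exp b, mul_nonneg hb'.le (Real.exp_pos b).le, hL' b hb'.le⟩
    exact this
  · apply ContinuousAt.continuousWithinAt
    apply StrictMonoOn.continuousAt_of_image_mem_nhds (Lsmono L hL hL' hLnonneg)
      (Ici_mem_nhds ha')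
    have h1 : Ici (0:ℝ) ⊆ L '' Ici 0 := by
      intro b hb
      exact ⟨b * Real.exp b, mul_nonneg hb (Real.exp_pos b).le, hL' b hb⟩
    exact mem_of_superset (Ioi_mem_nhds (Lpos L hL hL' hLnonneg ha')) (fun x hx => h1 (mem_Ici.2 (le_of_lt (mem_Ioi.1 hx))))

lemma LhasDeriv {u : ℝ} (hu : 0 < u) :
    HasDerivAt L (Real.exp (L u) * (1 + L u))⁻¹ u := by
  have hcont : ContinuousAt L u :=
    (Lcont L hL hL' hLnonneg u hu.le).continuousAt (Ici_mem_nhds hu)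
  have hg : HasDerivAt (fun x : ℝ => x * Real.exp x)
      (1 * Real.exp (L u) + L u * Real.exp (L u)) (L u) :=
    (hasDerivAt_id (L u)).mul (Real.hasDerivAt_exp (L u))
  have hne : (1 * Real.exp (L u) + L u * Real.exp (L u)) ≠ 0 := by
    have := Real.exp_pos (L u)
    have := hLnonneg u hu.le
    positivity
  have hfg : ∀ᶠ y in 𝓝 u, (fun x : ℝ => x * Real.exp x) (L y) = y := by
    filter_upwards [Ioi_mem_nhds hu] with y hy
    exact hL y (le_of_lt hy)
  have := HasDerivAt.of_local_left_inverse hcont hg hne hfg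
  convert this using 1
  congr 1
  ring

end L



section W
variable (w : ℝ → ℝ)
    (hpos : ∀ x : ℝ, 0 ≤ x → 0 < w x)
    (hmono : MonotoneOn w (Ici (0:ℝ)))
    (hWdiv : Tendsto (Wfun w) atTop atTop)
    (Winv : ℝ → ℝ)
    (hWinv : ∀ t : ℝ, 0 ≤ t → Winv (Wfun w t) = t)
    (hWinv' : ∀ y : ℝ, 0 ≤ y → Wfun w (Winv y) = y)

include hpos hmono

lemma wIntegrable {a b : ℝ} (ha : 0 ≤ a) (hab : a ≤ b) :
    IntervalIntegrable (fun u => (w u)⁻¹) volume a b := by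
  apply AntitoneOn.intervalIntegrable
  intro x hx y hy hxy
  rw [uIcc_of_le hab] at hx hy
  have hx0 : (0:ℝ) ≤ x := le_trans ha hx.1
  have hy0 : (0:ℝ) ≤ y := le_trans ha hy.1
  exact inv_anti₀ (hpos x hx0) (hmono hx0 hy0 hxy)

lemma Wfun_zero : Wfun w 0 = 0 := intervalIntegral.integral_same

lemma Wfun_diff {a b : ℝ} (ha : 0 ≤ a) (hab : a ≤ b) :
    Wfun w b = Wfun w a + ∫ u in a..b, (w u)⁻¹ := by
  have h1 := wIntegrable w hpos hmono le_rfl ha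
  have h2 := wIntegrable w hpos hmono ha hab
  have := intervalIntegral.integral_add_adjacent_intervals h1 h2
  simp only [Wfun]
  linarith [this]

lemma Wfun_mono : MonotoneOn (Wfun w) (Ici (0:ℝ)) := by
  intro a ha b hb hab
  rw [Wfun_diff w hpos hmono ha hab]
  have : 0 ≤ ∫ u in a..b, (w u)⁻¹ := by
    apply intervalIntegral.integral_nonneg hab
    intro u hu
    exact inv_nonneg.2 (hpos u (le_trans ha hu.1)).le
  linarith

lemma Wfun_contOn {M : ℝ} (hM : 0 ≤ M) : ContinuousOn (Wfun w) (Icc 0 M) := by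
  have hint : IntegrableOn (fun u => (w u)⁻¹) (uIcc 0 M) := by
    rw [uIcc_of_le hM]
    exact (intervalIntegrable_iff_integrableOn_Icc_of_le hM).1 (wIntegrable w hpos hmono le_rfl hM)
  have := intervalIntegral.continuousOn_primitive_interval hint
  rwa [uIcc_of_le hM] at this

lemma Wfun_nonneg {t : ℝ} (ht : 0 ≤ t) : 0 ≤ Wfun w t := by
  have := Wfun_mono w hpos hmono (self_mem_Ici) ht ht
  rwa [Wfun_zero w hpos hmono] at this

include hWdiv hWinv in
lemma Winv_eq {q : ℝ} (hq : 0 ≤ q) : ∃ t : ℝ, 0 ≤ t ∧ Wfun w t = q ∧ Winv q = t := by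
  obtain ⟨M, hM⟩ := (hWdiv.eventually_ge_atTop q).and (eventually_ge_atTop 0) |>.exists
  have hmem : q ∈ Icc (Wfun w 0) (Wfun w M) := by
    constructor
    · rwa [Wfun_zero w hpos hmono]
    · exact hM.1
  have := intermediate_value_Icc hM.2 (Wfun_contOn w hpos hmono hM.2)
  obtain ⟨t, ht, hWt⟩ := this hmem
  exact ⟨t, ht.1, hWt, by rw [← hWt, hWinv t ht.1]⟩

include hWdiv hWinv in
lemma Winv_nonneg {q : ℝ} (hq : 0 ≤ q) : 0 ≤ Winv q := by
  obtain ⟨t, ht, _, h⟩ := Winv_eq w hpos hmono hWdiv Winv hWinv hq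
  rw [h]; exact ht

include hWdiv hWinv hWinv' in
lemma Winv_mono : MonotoneOn Winv (Ici (0:ℝ)) := by
  intro a ha b hb hab
  by_contra h
  push_neg at h
  have h1 : Wfun w (Winv b) ≤ Wfun w (Winv a) :=
    Wfun_mono w hpos hmono (Winv_nonneg w hpos hmono hWdiv Winv hWinv hb)
      (Winv_nonneg w hpos hmono hWdiv Winv hWinv ha) h.le
  rw [hWinv' a ha, hWinv' b hb] at h1
  have : a = b := le_antisymm hab h1
  rw [this] at h
  exact lt_irrefl _ h

end W


def cc (w : ℝ → ℝ) : ℝ := Wfun w 1 - 1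

def Tc (c : ℝ) (y : ℝ) : ℝ := Real.exp ((y - c) * Real.log (y - c))

section All
variable (L : ℝ → ℝ)
    (hL : ∀ x : ℝ, 0 ≤ x → L x * Real.exp (L x) = x)
    (hL' : ∀ x : ℝ, 0 ≤ x → L (x * Real.exp x) = x)
    (hLnonneg : ∀ x : ℝ, 0 ≤ x → 0 ≤ L x)
    (w : ℝ → ℝ)
    (hw : ∀ x : ℝ, 1 ≤ x → w x = x * (1 + L (Real.log x)))
    (hpos : ∀ x : ℝ, 0 ≤ x → 0 < w x)
    (hmono : MonotoneOn w (Ici (0:ℝ)))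
    (hWdiv : Tendsto (Wfun w) atTop atTop)
    (Winv : ℝ → ℝ)
    (hWinv : ∀ t : ℝ, 0 ≤ t → Winv (Wfun w t) = t)
    (hWinv' : ∀ y : ℝ, 0 ≤ y → Wfun w (Winv y) = y)

-- assume previous lemmas available:
variable (vL0 : L 0 = 0)
    (vLcont : ContinuousOn L (Ici (0:ℝ)))
    (vLD : ∀ u : ℝ, 0 < u → HasDerivAt L (Real.exp (L u) * (1 + L u))⁻¹ u)
    (vwInt : ∀ a b : ℝ, 0 ≤ a → a ≤ b → IntervalIntegrable (fun u => (w u)⁻¹) volume a b)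
    (vWdiff : ∀ a b : ℝ, 0 ≤ a → a ≤ b → Wfun w b = Wfun w a + ∫ u in a..b, (w u)⁻¹)

include hL hL' hLnonneg hw hpos hmono vL0 vLcont vLD vwInt vWdiff

lemma Wfun_formula (t : ℝ) (ht : 1 ≤ t) :
    Wfun w t = cc w + Real.exp (L (Real.log t)) := by
  have hF : ∀ y ∈ Ioo (1:ℝ) t,
      HasDerivWithinAt (fun y => Real.exp (L (Real.log y))) ((w y)⁻¹) (Ioi y) y := by
    intro y hy
    have hy1 : (1:ℝ) < y := hy.1
    have hy0 : (0:ℝ) < y := lt_trans zero_lt_one hy1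
    have hu : 0 < Real.log y := Real.log_pos hy1
    have hlog : HasDerivAt Real.log y⁻¹ y := Real.hasDerivAt_log (ne_of_gt hy0)
    have hLd := vLD (Real.log y) hu
    have hexp : HasDerivAt Real.exp (Real.exp (L (Real.log y))) (L (Real.log y)) :=
      Real.hasDerivAt_exp _
    have hcomp := (hexp.comp y (hLd.comp y hlog))
    have heq : Real.exp (L (Real.log y)) *
        ((Real.exp (L (Real.log y)) * (1 + L (Real.log y)))⁻¹ * y⁻¹) = (w y)⁻¹ := by
      rw [hw y hy1.le]
      have h1 : Real.exp (L (Real.log y)) ≠ 0 := (Real.exp_pos _).ne'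
      have h2 : (0:ℝ) < 1 + L (Real.log y) := by
        have := hLnonneg (Real.log y) hu.le; linarith
      field_simp
    rw [heq] at hcomp
    exact hcomp.hasDerivWithinAt
  have hcont : ContinuousOn (fun y => Real.exp (L (Real.log y))) (Icc 1 t) := by
    apply Real.continuous_exp.comp_continuousOn
    apply vLcont.comp
    · apply Real.continuousOn_log.mono
      intro x hx; exact ne_of_gt (lt_of_lt_of_le zero_lt_one hx.1)
    · intro x hx
      exact Real.log_nonneg hx.1
  have hFTC := intervalIntegral.integral_eq_sub_of_hasDeriv_right_of_le ht hcont hF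
    (vwInt 1 t zero_le_one ht)
  have hWd := vWdiff 1 t zero_le_one ht
  rw [hFTC] at hWd
  rw [hWd]
  simp [cc, vL0]
  ring

lemma Tcc_ge_one (y : ℝ) (hy : cc w + 1 ≤ y) : 1 ≤ Tc (cc w) y := by
  have hz : 1 ≤ y - cc w := by linarith
  have : 0 ≤ (y - cc w) * Real.log (y - cc w) :=
    mul_nonneg (by linarith) (Real.log_nonneg hz)
  calc (1:ℝ) = Real.exp 0 := by simp
  _ ≤ Tc (cc w) y := Real.exp_le_exp.2 this

lemma L_log_Tcc (y : ℝ) (hy : cc w + 1 ≤ y) :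
    L (Real.log (Tc (cc w) y)) = Real.log (y - cc w) := by
  have hz : 1 ≤ y - cc w := by linarith
  unfold Tc
  rw [Real.log_exp]
  have : (y - cc w) * Real.log (y - cc w)
      = Real.log (y - cc w) * Real.exp (Real.log (y - cc w)) := by
    rw [Real.exp_log (by linarith)]; ring
  rw [this, hL' _ (Real.log_nonneg hz)]

lemma Wfun_Tcc (y : ℝ) (hy : cc w + 1 ≤ y) : Wfun w (Tc (cc w) y) = y := by
  have hz : 1 ≤ y - cc w := by linarith
  rw [Wfun_formula L hL hL' hLnonneg w hw hpos hmono vL0 vLcont vLD vwInt vWdiff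
    _ (Tcc_ge_one L hL hL' hLnonneg w hw hpos hmono vL0 vLcont vLD vwInt vWdiff y hy),
    L_log_Tcc L hL hL' hLnonneg w hw hpos hmono vL0 vLcont vLD vwInt vWdiff y hy,
    Real.exp_log (by linarith : (0:ℝ) < y - cc w)]
  ring

include hWinv in
lemma Winv_Tcc (y : ℝ) (hy : cc w + 1 ≤ y) : Winv y = Tc (cc w) y := by
  conv_lhs => rw [← Wfun_Tcc L hL hL' hLnonneg w hw hpos hmono vL0 vLcont vLD vwInt
    vWdiff y hy]
  exact hWinv _ (le_trans zero_le_one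
    (Tcc_ge_one L hL hL' hLnonneg w hw hpos hmono vL0 vLcont vLD vwInt vWdiff y hy))

include hWinv in
lemma w_Winv_eq (y : ℝ) (hy : cc w + 1 ≤ y) :
    w (Winv y) = Real.exp ((y - cc w) * Real.log (y - cc w)) * (1 + Real.log (y - cc w)) := by
  rw [Winv_Tcc L hL hL' hLnonneg w hw hpos hmono Winv hWinv vL0 vLcont vLD vwInt vWdiff y hy,
    hw _ (Tcc_ge_one L hL hL' hLnonneg w hw hpos hmono vL0 vLcont vLD vwInt vWdiff y hy),
    L_log_Tcc L hL hL' hLnonneg w hw hpos hmono vL0 vLcont vLD vwInt vWdiff y hy]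
  rfl

end All


lemma ratio_tendsto (c : ℝ) (w Winv : ℝ → ℝ)
    (hwW : ∀ y : ℝ, c + 1 ≤ y →
      w (Winv y) = Real.exp ((y - c) * Real.log (y - c)) * (1 + Real.log (y - c)))
    (α : ℝ) (hα : 0 < α) :
    Tendsto (fun y : ℝ =>
        (w (Winv y) / w (Winv (y + α))) / (Real.exp (-α) / y ^ α)) atTop (𝓝 1) := by
  have h1 : Tendsto (fun y : ℝ => (y - c) * Real.log (1 + α / (y - c))) atTop (𝓝 α) := by
    have hb : Tendsto (fun y : ℝ => y - c) atTop atTop :=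
      tendsto_atTop_add_const_right atTop (-c) tendsto_id
    exact (Real.tendsto_mul_log_one_add_div_atTop α).comp hb
  have hsub : Tendsto (fun y : ℝ => y - c) atTop atTop :=
    tendsto_atTop_add_const_right atTop (-c) tendsto_id
  have h2 : Tendsto (fun y : ℝ => Real.log (1 + (α - c) / y)) atTop (𝓝 0) := by
    have hbase : Tendsto (fun y : ℝ => 1 + (α - c) / y) atTop (𝓝 1) := by
      simpa using tendsto_const_nhds.add (Tendsto.div_atTop (tendsto_const_nhds (x := α - c)) tendsto_id)
    have := (Real.continuousAt_log one_ne_zero).tendsto.comp hbase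
    simpa [Function.comp_def] using this
  have h3 : Tendsto (fun y : ℝ => Real.log (1 + α / (y - c))) atTop (𝓝 0) := by
    have hbase : Tendsto (fun y : ℝ => 1 + α / (y - c)) atTop (𝓝 1) := by
      simpa using tendsto_const_nhds.add (Tendsto.div_atTop (tendsto_const_nhds (x := α)) hsub)
    have := (Real.continuousAt_log one_ne_zero).tendsto.comp hbase
    simpa [Function.comp_def] using this
  have h4 : Tendsto (fun y : ℝ => 1 + Real.log (y - c + α)) atTop atTop := by
    apply tendsto_atTop_add_const_left
    exact Real.tendsto_log_atTop.comp (tendsto_atTop_add_const_right atTop α hsub)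
  have hexp : Tendsto (fun y : ℝ =>
      (α - (y - c) * Real.log (1 + α / (y - c))) + α * (-Real.log (1 + (α - c) / y)))
      atTop (𝓝 0) := by
    have := (tendsto_const_nhds (x := α)).sub h1 |>.add ((h2.neg).const_mul α)
    simpa using this
  have hG : Tendsto (fun y : ℝ =>
      Real.exp ((α - (y - c) * Real.log (1 + α / (y - c))) + α * (-Real.log (1 + (α - c) / y))) *
        (1 - Real.log (1 + α / (y - c)) / (1 + Real.log (y - c + α)))) atTop (𝓝 1) := by
    have := ((Real.continuous_exp.tendsto 0).comp hexp).mul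
      ((tendsto_const_nhds (x := (1:ℝ))).sub (h3.div_atTop h4))
    simpa using this
  apply hG.congr'
  filter_upwards [eventually_ge_atTop (max (c + 2) 1)] with y hy
  have hy2 : c + 2 ≤ y := le_trans (le_max_left _ _) hy
  have hy1 : (1:ℝ) ≤ y := le_trans (le_max_right _ _) hy
  have hy0 : (0:ℝ) < y := lt_of_lt_of_le zero_lt_one hy1
  have hz : (2:ℝ) ≤ y - c := by linarith
  have hz0 : (0:ℝ) < y - c := by linarith
  have hz1 : (1:ℝ) ≤ y - c := by linarith
  have hz'0 : (0:ℝ) < y - c + α := by linarith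
  have hz'1 : (1:ℝ) ≤ y - c + α := by linarith
  have hq0 : (0:ℝ) < 1 + α / (y - c) := by positivity
  have hr0 : (0:ℝ) < 1 + (α - c) / y := by
    have : 1 + (α - c) / y = (y - c + α) / y := by field_simp; ring
    rw [this]; positivity
  have e1 : w (Winv y) = Real.exp ((y - c) * Real.log (y - c)) * (1 + Real.log (y - c)) :=
    hwW y (by linarith)
  have e2 : w (Winv (y + α))
      = Real.exp ((y - c + α) * Real.log (y - c + α)) * (1 + Real.log (y - c + α)) := by
    have := hwW (y + α) (by linarith)
    rw [show y + α - c = y - c + α from by ring] at this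
    exact this
  have l1 : Real.log (y - c + α) = Real.log (y - c) + Real.log (1 + α / (y - c)) := by
    have harg : y - c + α = (y - c) * (1 + α / (y - c)) := by field_simp
    rw [harg, Real.log_mul (ne_of_gt hz0) (ne_of_gt hq0)]
  have l2 : Real.log (y - c + α) = Real.log y + Real.log (1 + (α - c) / y) := by
    have harg : y - c + α = y * (1 + (α - c) / y) := by field_simp; ring
    rw [harg, Real.log_mul (ne_of_gt hy0) (ne_of_gt hr0)]
  have l2c : Real.log y
      = Real.log (y - c) + Real.log (1 + α / (y - c)) - Real.log (1 + (α - c) / y) := by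
    rw [← l1, l2]; ring
  have hlz : (0:ℝ) ≤ Real.log (y - c) := Real.log_nonneg hz1
  have hlz' : (0:ℝ) ≤ Real.log (y - c + α) := Real.log_nonneg hz'1
  have hb : (0:ℝ) < 1 + Real.log (y - c + α) := by linarith
  have hb1 : (0:ℝ) < 1 + Real.log (y - c) := by linarith
  -- step 1 : express ratio
  have hstep1 : (w (Winv y) / w (Winv (y + α))) / (Real.exp (-α) / y ^ α)
      = Real.exp ((y - c) * Real.log (y - c) + Real.log y * α
          - (y - c + α) * Real.log (y - c + α) + α)
        * ((1 + Real.log (y - c)) / (1 + Real.log (y - c + α))) := by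
    rw [e1, e2, Real.rpow_def_of_pos hy0]
    rw [show (y - c) * Real.log (y - c) + Real.log y * α - (y - c + α) * Real.log (y - c + α) + α
      = ((y - c) * Real.log (y - c) + Real.log y * α)
        - ((y - c + α) * Real.log (y - c + α) + (-α)) from by ring]
    rw [Real.exp_sub, Real.exp_add, Real.exp_add]
    have p1 := Real.exp_pos ((y - c) * Real.log (y - c))
    have p2 := Real.exp_pos ((y - c + α) * Real.log (y - c + α))
    have p3 := Real.exp_pos (Real.log y * α)
    have p4 := Real.exp_pos (-α)
    field_simp
  have hstep2 : (y - c) * Real.log (y - c) + Real.log y * α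
      - (y - c + α) * Real.log (y - c + α) + α
      = (α - (y - c) * Real.log (1 + α / (y - c))) + α * (-Real.log (1 + (α - c) / y)) := by
    rw [l2c, l1]; ring
  have hstep3 : (1 + Real.log (y - c)) / (1 + Real.log (y - c + α))
      = 1 - Real.log (1 + α / (y - c)) / (1 + Real.log (y - c + α)) := by
    rw [l1] at hb ⊢
    rw [eq_sub_iff_add_eq, ← add_div, div_eq_one_iff_eq (ne_of_gt hb)]
    ring
  rw [hstep1, hstep2, hstep3]




lemma Tc_strictMonoOn (c : ℝ) : StrictMonoOn (Tc c) (Ici (c + 1)) := by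
  intro a ha b hb hab
  simp only [mem_Ici] at ha hb
  have ha1 : (1:ℝ) ≤ a - c := by linarith
  have hb1 : (1:ℝ) < b - c := by linarith
  have hlog : Real.log (a - c) < Real.log (b - c) := by
    apply Real.log_lt_log (by linarith) (by linarith)
  have hla : (0:ℝ) ≤ Real.log (a - c) := Real.log_nonneg ha1
  have hlb : (0:ℝ) < Real.log (b - c) := Real.log_pos hb1
  apply Real.exp_lt_exp.2
  nlinarith
lemma Tc_pos (c y : ℝ) : 0 < Tc c y := Real.exp_pos _

lemma Tc_one_le (c y : ℝ) (hy : c + 1 ≤ y) : 1 ≤ Tc c y := by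
  have hz : (1:ℝ) ≤ y - c := by linarith
  have : (0:ℝ) ≤ (y - c) * Real.log (y - c) := mul_nonneg (by linarith) (Real.log_nonneg hz)
  calc (1:ℝ) = Real.exp 0 := by simp
  _ ≤ Tc c y := Real.exp_le_exp.2 this

lemma Tc_ge (c y : ℝ) (hy : c + 1 ≤ y) : y - c ≤ Tc c y := by
  have hz : (1:ℝ) ≤ y - c := by linarith
  have hz0 : (0:ℝ) < y - c := by linarith
  have h1 : Real.log (y - c) ≤ (y - c) * Real.log (y - c) :=
    le_mul_of_one_le_left (Real.log_nonneg hz) hz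
  calc y - c = Real.exp (Real.log (y - c)) := (Real.exp_log hz0).symm
  _ ≤ Tc c y := Real.exp_le_exp.2 h1

lemma Tc_tendsto (c : ℝ) : Tendsto (Tc c) atTop atTop := by
  apply tendsto_atTop_mono' atTop (f₁ := fun y => y - c)
  · filter_upwards [eventually_ge_atTop (c + 1)] with y hy
    exact Tc_ge c y hy
  · exact tendsto_atTop_add_const_right atTop (-c) tendsto_id

lemma Tc_contOn (c : ℝ) : ContinuousOn (Tc c) (Ici (c + 1)) := by
  apply Real.continuous_exp.comp_continuousOn
  apply ContinuousOn.mul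
  · exact (continuousOn_id.sub continuousOn_const)
  · apply Real.continuousOn_log.comp (continuousOn_id.sub continuousOn_const)
    intro x hx
    simp only [mem_Ici] at hx
    simp only [mem_compl_iff, mem_singleton_iff, id_eq]
    intro h
    simp only [Pi.sub_apply, id_eq, sub_eq_zero] at h  -- x - c = 0
    · rw [h] at hx; linarith

lemma Tc_image (c y0 : ℝ) (hy0 : c + 1 ≤ y0) : Tc c '' (Ioi y0) = Ioi (Tc c y0) := by
  apply Subset.antisymm
  · rintro x ⟨y, hy, rfl⟩
    exact Tc_strictMonoOn c (by simpa using hy0) (le_trans hy0 (le_of_lt hy)) hy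
  · intro x hx
    simp only [mem_Ioi] at hx
    obtain ⟨M, hM⟩ := ((Tc_tendsto c).eventually_ge_atTop x).and (eventually_ge_atTop y0) |>.exists
    have hy0M : y0 ≤ M := hM.2
    have hsub : Icc y0 M ⊆ Ici (c + 1) := fun z hz => le_trans hy0 hz.1
    have := intermediate_value_Icc hy0M ((Tc_contOn c).mono hsub)
    obtain ⟨y, hy, hTy⟩ := this ⟨hx.le, hM.1⟩
    refine ⟨y, ?_, hTy⟩
    rcases eq_or_lt_of_le hy.1 with rfl | h
    · exfalso; rw [hTy] at hx; exact lt_irrefl _ hx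
    · exact h

lemma Tc_hasDeriv (c y : ℝ) (hy : c + 1 ≤ y) :
    HasDerivAt (Tc c) (Tc c y * (1 + Real.log (y - c))) y := by
  have hz0 : (0:ℝ) < y - c := by linarith
  have hsub : HasDerivAt (fun y : ℝ => y - c) 1 y := (hasDerivAt_id y).sub_const c
  have hlog : HasDerivAt (fun y : ℝ => Real.log (y - c)) ((y - c)⁻¹ * 1) y :=
    by have h := (Real.hasDerivAt_log (ne_of_gt hz0)).comp y hsub; exact h
  have hmul : HasDerivAt (fun y : ℝ => (y - c) * Real.log (y - c))
      (1 * Real.log (y - c) + (y - c) * ((y - c)⁻¹ * 1)) y := hsub.mul hlog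
  have hexp := (Real.hasDerivAt_exp ((y - c) * Real.log (y - c))).comp y hmul
  have heq : Tc c y * (1 + Real.log (y - c)) = Real.exp ((y - c) * Real.log (y - c)) *
      (1 * Real.log (y - c) + (y - c) * ((y - c)⁻¹ * 1)) := by
    unfold Tc; rw [mul_one, mul_inv_cancel₀ (ne_of_gt hz0)]; ring
  rw [heq]; exact hexp


lemma tail_eq (c α : ℝ) (w Winv : ℝ → ℝ)
    (hWT : ∀ y : ℝ, c + 1 ≤ y → Wfun w (Tc c y) = y)
    (hwT : ∀ y : ℝ, c + 1 ≤ y → w (Winv y) = Tc c y * (1 + Real.log (y - c)))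
    (hWpos : ∀ q : ℝ, 0 ≤ q → 0 < w (Winv q))
    (hα : 0 < α) (y0 : ℝ) (hy0 : c + 1 ≤ y0) (hy0' : 0 ≤ y0) :
    ∫⁻ x in Ioi (Tc c y0), ENNReal.ofReal (w (Winv (Wfun w x + α)))⁻¹
      = ∫⁻ y in Ioi y0, ENNReal.ofReal (w (Winv y) / w (Winv (y + α))) := by
  rw [← Tc_image c y0 hy0]
  rw [_root_.lintegral_image_eq_lintegral_abs_deriv_mul (f' := fun y => Tc c y * (1 + Real.log (y - c)))
    measurableSet_Ioi
    (fun y hy => (Tc_hasDeriv c y (le_trans hy0 (le_of_lt hy))).hasDerivWithinAt)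
    (((Tc_strictMonoOn c).injOn).mono (fun z hz => le_trans hy0 (le_of_lt hz)))]
  apply setLIntegral_congr_fun measurableSet_Ioi
  intro y hy
  have hy' : c + 1 ≤ y := le_trans hy0 (le_of_lt hy)
  have hy'' : 0 ≤ y := le_trans hy0' (le_of_lt hy)
  beta_reduce
  rw [hWT y hy', ← hwT y hy']
  have h1 : 0 < w (Winv y) := hWpos y hy''
  have h2 : 0 < w (Winv (y + α)) := hWpos (y + α) (by linarith)
  rw [abs_of_pos h1, div_eq_mul_inv, ENNReal.ofReal_mul h1.le]

lemma Ia_iff (c α : ℝ) (hα : 0 < α) (w Winv : ℝ → ℝ)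
    (hWT : ∀ y : ℝ, c + 1 ≤ y → Wfun w (Tc c y) = y)
    (hwT : ∀ y : ℝ, c + 1 ≤ y → w (Winv y) = Tc c y * (1 + Real.log (y - c)))
    (hWpos : ∀ q : ℝ, 0 ≤ q → 0 < w (Winv q))
    (hWnonneg : ∀ t : ℝ, 0 ≤ t → 0 ≤ Wfun w t)
    (hWinvmono : MonotoneOn Winv (Ici 0))
    (hWinvnonneg : ∀ q : ℝ, 0 ≤ q → 0 ≤ Winv q)
    (hmono : MonotoneOn w (Ici (0:ℝ)))
    (hratio : Tendsto (fun y : ℝ =>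
        (w (Winv y) / w (Winv (y + α))) / (Real.exp (-α) / y ^ α)) atTop (𝓝 1)) :
    Ia w Winv α < ⊤ ↔ 1 < α := by
  -- choose threshold y0
  have hIoo : (1:ℝ) ∈ Ioo (1/2 : ℝ) 2 := by norm_num
  have hbounds : ∀ᶠ y in atTop,
      (w (Winv y) / w (Winv (y + α))) / (Real.exp (-α) / y ^ α) ∈ Ioo (1/2 : ℝ) 2 :=
    hratio (Ioo_mem_nhds (by norm_num) (by norm_num))
  obtain ⟨a, ha⟩ := eventually_atTop.1 hbounds
  set y0 : ℝ := max a (max (c + 1) 1) with hy0def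
  have hy0a : a ≤ y0 := le_max_left _ _
  have hy0c : c + 1 ≤ y0 := le_trans (le_max_left _ _) (le_max_right _ _)
  have hy01 : (1:ℝ) ≤ y0 := le_trans (le_max_right _ _) (le_max_right _ _)
  have hy0pos : (0:ℝ) < y0 := lt_of_lt_of_le zero_lt_one hy01
  -- ratio bounds for y > y0
  have hub : ∀ y : ℝ, y0 < y →
      w (Winv y) / w (Winv (y + α)) ≤ 2 * y ^ (-α) := by
    intro y hy
    have hmem := ha y (le_trans hy0a hy.le)
    have hypos : (0:ℝ) < y := lt_trans hy0pos hy
    have hypow : (0:ℝ) < y ^ α := Real.rpow_pos_of_pos hypos α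
    have hD : (0:ℝ) < Real.exp (-α) / y ^ α := by positivity
    have h2 := hmem.2
    rw [div_lt_iff₀ hD] at h2
    have hexp1 : Real.exp (-α) ≤ 1 := Real.exp_le_one_iff.2 (by linarith)
    have : Real.exp (-α) / y ^ α ≤ y ^ (-α) := by
      rw [Real.rpow_neg hypos.le]
      rw [div_eq_mul_inv]
      nlinarith [inv_pos.2 hypow]
    nlinarith
  have hlb : ∀ y : ℝ, y0 < y →
      Real.exp (-α) / 2 * y ^ (-α) ≤ w (Winv y) / w (Winv (y + α)) := by
    intro y hy
    have hmem := ha y (le_trans hy0a hy.le)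
    have hypos : (0:ℝ) < y := lt_trans hy0pos hy
    have hypow : (0:ℝ) < y ^ α := Real.rpow_pos_of_pos hypos α
    have hD : (0:ℝ) < Real.exp (-α) / y ^ α := by positivity
    have h2 := hmem.1
    rw [lt_div_iff₀ hD] at h2
    have : Real.exp (-α) / 2 * y ^ (-α) = 1/2 * (Real.exp (-α) / y ^ α) := by
      rw [Real.rpow_neg hypos.le]
      field_simp
    rw [this]
    linarith
  -- split Ia
  have hTpos : (0:ℝ) < Tc c y0 := Tc_pos c y0
  have hsplit : Ia w Winv α
      = (∫⁻ x in Ioc (0:ℝ) (Tc c y0), ENNReal.ofReal (w (Winv (Wfun w x + α)))⁻¹)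
        + ∫⁻ x in Ioi (Tc c y0), ENNReal.ofReal (w (Winv (Wfun w x + α)))⁻¹ := by
    rw [Ia, ← Ioc_union_Ioi_eq_Ioi hTpos.le,
      lintegral_union measurableSet_Ioi (Set.Ioc_disjoint_Ioi le_rfl)]
  have htail := tail_eq c α w Winv hWT hwT hWpos hα y0 hy0c (by linarith)
  have hfin1 : (∫⁻ x in Ioc (0:ℝ) (Tc c y0), ENNReal.ofReal (w (Winv (Wfun w x + α)))⁻¹) < ⊤ := by
    have hbound : ∀ x ∈ Ioc (0:ℝ) (Tc c y0),
        ENNReal.ofReal (w (Winv (Wfun w x + α)))⁻¹ ≤ ENNReal.ofReal (w (Winv α))⁻¹ := by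
      intro x hx
      have hx0 : (0:ℝ) ≤ x := hx.1.le
      have h1 : α ≤ Wfun w x + α := by have := hWnonneg x hx0; linarith
      have h2 : Winv α ≤ Winv (Wfun w x + α) :=
        hWinvmono (mem_Ici.2 hα.le) (mem_Ici.2 (by linarith)) h1
      have h3 : w (Winv α) ≤ w (Winv (Wfun w x + α)) :=
        hmono (mem_Ici.2 (hWinvnonneg α hα.le))
          (mem_Ici.2 (hWinvnonneg _ (by linarith [hWnonneg x hx0]))) h2
      exact ENNReal.ofReal_le_ofReal (inv_anti₀ (hWpos α hα.le) h3)
    calc (∫⁻ x in Ioc (0:ℝ) (Tc c y0), ENNReal.ofReal (w (Winv (Wfun w x + α)))⁻¹)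
        ≤ ∫⁻ _ in Ioc (0:ℝ) (Tc c y0), ENNReal.ofReal (w (Winv α))⁻¹ :=
          setLIntegral_mono' measurableSet_Ioc hbound
      _ = ENNReal.ofReal (w (Winv α))⁻¹ * volume (Ioc (0:ℝ) (Tc c y0)) :=
          setLIntegral_const _ _
      _ < ⊤ := by
          apply ENNReal.mul_lt_top ENNReal.ofReal_lt_top
          rw [Real.volume_Ioc]
          exact ENNReal.ofReal_lt_top
  constructor
  · -- Ia < ⊤ → 1 < α
    intro hIa
    by_contra hle
    push_neg at hle
    have htail_le : (∫⁻ x in Ioi (Tc c y0), ENNReal.ofReal (w (Winv (Wfun w x + α)))⁻¹) ≤ Ia w Winv α := by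
      rw [Ia]
      exact lintegral_mono_set (Ioi_subset_Ioi hTpos.le)
    have hdiv : (∫⁻ y in Ioi y0, ENNReal.ofReal (w (Winv y) / w (Winv (y + α)))) = ⊤ := by
      rw [eq_top_iff]
      calc (⊤:ℝ≥0∞) = ∫⁻ y in Ioi y0, ENNReal.ofReal (Real.exp (-α) / 2 * y ^ (-α)) := by
            symm
            by_contra hfin
            have hfin' : (∫⁻ y in Ioi y0, ENNReal.ofReal (Real.exp (-α) / 2 * y ^ (-α))) < ⊤ :=
              lt_top_iff_ne_top.2 hfin
            have hcont : ContinuousOn (fun y : ℝ => Real.exp (-α) / 2 * y ^ (-α)) (Ioi y0) := by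
              apply ContinuousOn.mul continuousOn_const
              intro y hy
              exact (Real.continuousAt_rpow_const y (-α)
                (Or.inl (ne_of_gt (lt_trans hy0pos hy)))).continuousWithinAt
            have hmeas : AEStronglyMeasurable (fun y : ℝ => Real.exp (-α) / 2 * y ^ (-α))
                (volume.restrict (Ioi y0)) :=
              hcont.aestronglyMeasurable measurableSet_Ioi
            have hnonneg : 0 ≤ᵐ[volume.restrict (Ioi y0)]
                (fun y : ℝ => Real.exp (-α) / 2 * y ^ (-α)) := by
              apply ae_restrict_of_forall_mem measurableSet_Ioi
              intro y hy
              have : (0:ℝ) < y := lt_trans hy0pos hy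
              positivity
            have hInt : IntegrableOn (fun y : ℝ => Real.exp (-α) / 2 * y ^ (-α)) (Ioi y0) :=
              ⟨hmeas, (hasFiniteIntegral_iff_ofReal hnonneg).2 hfin'⟩
            have hInt2 : IntegrableOn (fun y : ℝ => y ^ (-α)) (Ioi y0) := by
              have h2 := hInt.const_mul (2 * Real.exp α)
              apply MeasureTheory.IntegrableOn.congr_fun h2 ?_ measurableSet_Ioi
              intro y hy
              have hx : Real.exp (-α) ≠ 0 := (Real.exp_pos _).ne'
              simp only []
              rw [Real.exp_neg]
              field_simp
            rw [integrableOn_Ioi_rpow_iff hy0pos] at hInt2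
            linarith
      _ ≤ ∫⁻ y in Ioi y0, ENNReal.ofReal (w (Winv y) / w (Winv (y + α))) := by
            apply setLIntegral_mono' measurableSet_Ioi
            intro y hy
            exact ENNReal.ofReal_le_ofReal (hlb y hy)
    have htop : (⊤:ℝ≥0∞) ≤ Ia w Winv α := by
      rw [← hdiv, ← htail]
      exact htail_le
    exact absurd (lt_of_le_of_lt htop hIa) (lt_irrefl ⊤)
  · -- 1 < α → Ia < ⊤
    intro h1α
    rw [hsplit]
    apply ENNReal.add_lt_top.2
    refine ⟨hfin1, ?_⟩
    rw [htail]
    have hInt : IntegrableOn (fun y : ℝ => 2 * y ^ (-α)) (Ioi y0) :=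
      (integrableOn_Ioi_rpow_of_lt (by linarith) hy0pos).const_mul 2
    calc (∫⁻ y in Ioi y0, ENNReal.ofReal (w (Winv y) / w (Winv (y + α))))
        ≤ ∫⁻ y in Ioi y0, ENNReal.ofReal (2 * y ^ (-α)) := by
          apply setLIntegral_mono' measurableSet_Ioi
          intro y hy
          exact ENNReal.ofReal_le_ofReal (hub y hy)
      _ < ⊤ := hInt.lintegral_lt_top

lemma sInf_ofReal_Ioi_one : sInf (ENNReal.ofReal '' Ioi (1:ℝ)) = 1 := by
  apply le_antisymm
  · apply ENNReal.le_of_forall_pos_le_add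
    intro ε hε _
    have hmem : ((1:ℝ) + (ε:ℝ)) ∈ Ioi (1:ℝ) := by
      simp only [mem_Ioi]
      have : (0:ℝ) < (ε:ℝ) := hε
      linarith
    calc sInf (ENNReal.ofReal '' Ioi (1:ℝ)) ≤ ENNReal.ofReal (1 + (ε:ℝ)) :=
          sInf_le ⟨1 + (ε:ℝ), hmem, rfl⟩
    _ = 1 + (ε:ℝ≥0∞) := by
          rw [ENNReal.ofReal_add zero_le_one (by positivity), ENNReal.ofReal_one,
            ENNReal.ofReal_coe_nnreal]
  · apply le_sInf
    rintro b ⟨x, hx, rfl⟩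
    calc (1:ℝ≥0∞) = ENNReal.ofReal 1 := ENNReal.ofReal_one.symm
    _ ≤ ENNReal.ofReal x := ENNReal.ofReal_le_ofReal (le_of_lt hx)

/-- for `w(x) = x (1 + L(log x))` for `x ≥ 1` (with `L` the Lambert function,
`L(x) e^{L(x)} = x`), one has `w(W⁻¹(y))/w(W⁻¹(y+α)) ∼ e^{-α}/y^α` as `y → ∞` for every
`α > 0`; consequently `α_c(w) = 1`. -/
theorem stmt7 (L : ℝ → ℝ)
    (hL : ∀ x : ℝ, 0 ≤ x → L x * Real.exp (L x) = x)
    (hL' : ∀ x : ℝ, 0 ≤ x → L (x * Real.exp x) = x)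
    (hLnonneg : ∀ x : ℝ, 0 ≤ x → 0 ≤ L x)
    (w : ℝ → ℝ)
    (hw : ∀ x : ℝ, 1 ≤ x → w x = x * (1 + L (Real.log x)))
    (hpos : ∀ x : ℝ, 0 ≤ x → 0 < w x)
    (hmono : MonotoneOn w (Ici (0:ℝ)))
    (hWdiv : Tendsto (Wfun w) atTop atTop)
    (Winv : ℝ → ℝ)
    (hWinv : ∀ t : ℝ, 0 ≤ t → Winv (Wfun w t) = t)
    (hWinv' : ∀ y : ℝ, 0 ≤ y → Wfun w (Winv y) = y) :
    (∀ α : ℝ, 0 < α →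
        Tendsto (fun y : ℝ =>
            (w (Winv y) / w (Winv (y + α))) / (Real.exp (-α) / y ^ α))
          atTop (nhds 1)) ∧
    alphac w Winv = 1 := by
  have hvL0 : L 0 = 0 := L0 L hL hL' hLnonneg
  have hvLcont : ContinuousOn L (Ici (0:ℝ)) := Lcont L hL hL' hLnonneg
  have hvLD : ∀ u : ℝ, 0 < u → HasDerivAt L (Real.exp (L u) * (1 + L u))⁻¹ u :=
    fun u hu => LhasDeriv L hL hL' hLnonneg hu
  have hvwInt : ∀ a b : ℝ, 0 ≤ a → a ≤ b → IntervalIntegrable (fun u => (w u)⁻¹) volume a b :=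
    fun a b ha hab => wIntegrable w hpos hmono ha hab
  have hvWdiff : ∀ a b : ℝ, 0 ≤ a → a ≤ b → Wfun w b = Wfun w a + ∫ u in a..b, (w u)⁻¹ :=
    fun a b ha hab => Wfun_diff w hpos hmono ha hab
  have hwW : ∀ y : ℝ, cc w + 1 ≤ y →
      w (Winv y) = Real.exp ((y - cc w) * Real.log (y - cc w)) * (1 + Real.log (y - cc w)) :=
    fun y hy => w_Winv_eq L hL hL' hLnonneg w hw hpos hmono Winv hWinv
      hvL0 hvLcont hvLD hvwInt hvWdiff y hy
  have part1 : ∀ α : ℝ, 0 < α →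
      Tendsto (fun y : ℝ =>
          (w (Winv y) / w (Winv (y + α))) / (Real.exp (-α) / y ^ α)) atTop (𝓝 1) :=
    fun α hα => ratio_tendsto (cc w) w Winv hwW α hα
  refine ⟨part1, ?_⟩
  -- part 2
  have hWT : ∀ y : ℝ, cc w + 1 ≤ y → Wfun w (Tc (cc w) y) = y :=
    fun y hy => Wfun_Tcc L hL hL' hLnonneg w hw hpos hmono hvL0 hvLcont hvLD hvwInt hvWdiff y hy
  have hwT : ∀ y : ℝ, cc w + 1 ≤ y →
      w (Winv y) = Tc (cc w) y * (1 + Real.log (y - cc w)) := fun y hy => hwW y hy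
  have hWinvnonneg : ∀ q : ℝ, 0 ≤ q → 0 ≤ Winv q :=
    fun q hq => Winv_nonneg w hpos hmono hWdiv Winv hWinv hq
  have hWpos : ∀ q : ℝ, 0 ≤ q → 0 < w (Winv q) :=
    fun q hq => hpos _ (hWinvnonneg q hq)
  have hWnonneg : ∀ t : ℝ, 0 ≤ t → 0 ≤ Wfun w t :=
    fun t ht => Wfun_nonneg w hpos hmono ht
  have hWinvmono : MonotoneOn Winv (Ici (0:ℝ)) :=
    Winv_mono w hpos hmono hWdiv Winv hWinv hWinv'
  have hkey : ∀ α : ℝ, 0 < α → (Ia w Winv α < ⊤ ↔ 1 < α) :=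
    fun α hα => Ia_iff (cc w) α hα w Winv hWT hwT hWpos hWnonneg hWinvmono hWinvnonneg hmono
      (part1 α hα)
  have hS : {α : ℝ | 0 < α ∧ Ia w Winv α < ⊤} = Ioi (1:ℝ) := by
    ext α
    simp only [mem_setOf_eq, mem_Ioi]
    constructor
    · rintro ⟨hα, hIa⟩
      exact (hkey α hα).1 hIa
    · intro h1
      have hα : 0 < α := lt_trans zero_lt_one h1
      exact ⟨hα, (hkey α hα).2 h1⟩
  rw [alphac, hS, sInf_ofReal_Ioi_one]
end
end

section
/- Let w be a positive non-decreasing weight function with diverging W and α_c(w) < ∞. Then liminf_{x→∞} w(x)/x ≥ 1/α_c(w). In particular, if α_c(w) < ∞ then ∑ₙ 1/w(n)² < ∞, and if α_c(w) = 0 then w(x)/x → ∞. -/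
open MeasureTheory Filter Topology Set
open scoped ENNReal NNReal

noncomputable section

section aux
variable {v : ℝ → ℝ} (hv : Monotone v) (hvpos : ∀ x, 0 < v x)
include hv hvpos

lemma anti_inv : Antitone fun u => (v u)⁻¹ := fun a b hab =>
  inv_anti₀ (hvpos a) (hv hab)

lemma intInt (a b : ℝ) : IntervalIntegrable (fun u => (v u)⁻¹) volume a b :=
  (anti_inv hv hvpos).intervalIntegrable

lemma Wdiff (a b : ℝ) : Wfun v b - Wfun v a = ∫ u in a..b, (v u)⁻¹ := by
  have := intervalIntegral.integral_add_adjacent_intervals (μ := volume)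
    (intInt hv hvpos 0 a) (intInt hv hvpos a b)
  unfold Wfun; linarith

lemma Wlb {a b : ℝ} (hab : a ≤ b) : (b - a) * (v b)⁻¹ ≤ Wfun v b - Wfun v a := by
  rw [Wdiff hv hvpos]
  have h1 : (∫ _ in a..b, (v b)⁻¹) ≤ ∫ u in a..b, (v u)⁻¹ :=
    intervalIntegral.integral_mono_on hab (intervalIntegrable_const) (intInt hv hvpos a b)
      (fun x hx => inv_anti₀ (hvpos x) (hv hx.2))
  simpa [intervalIntegral.integral_const, smul_eq_mul, mul_comm] using h1

lemma Wsmono : StrictMono (Wfun v) := fun a b hab => by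
  have h := Wlb hv hvpos hab.le
  have : 0 < (b - a) * (v b)⁻¹ :=
    mul_pos (by linarith) (inv_pos.mpr (hvpos b))
  linarith

omit hv hvpos in
lemma W0 : Wfun v 0 = 0 := intervalIntegral.integral_same

end aux

section aux2
variable {v : ℝ → ℝ} (hv : Monotone v) (hvpos : ∀ x, 0 < v x)
  {Winv : ℝ → ℝ} (hW' : ∀ y : ℝ, 0 ≤ y → Wfun v (Winv y) = y)
include hv hvpos hW'

lemma Winv_nonneg_s9 {y : ℝ} (hy : 0 ≤ y) : 0 ≤ Winv y := by
  by_contra h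
  push_neg at h
  have := Wsmono hv hvpos h
  rw [hW' y hy, W0] at this
  linarith

lemma Winv_mono_s9 {y₁ y₂ : ℝ} (hy₁ : 0 ≤ y₁) (h : y₁ ≤ y₂) : Winv y₁ ≤ Winv y₂ := by
  by_contra hcon
  push_neg at hcon
  have := Wsmono hv hvpos hcon
  rw [hW' y₁ hy₁, hW' y₂ (hy₁.trans h)] at this
  linarith

end aux2

lemma wext_mono {w : ℕ → ℝ} (hmono : Monotone w) : Monotone (wext w) :=
  fun _ _ hab => hmono (Nat.floor_mono hab)

lemma wext_pos {w : ℕ → ℝ} (hpos : ∀ n, 0 < w n) : ∀ x, 0 < wext w x := fun _ => hpos _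

lemma Wsum {w : ℕ → ℝ} (hpos : ∀ n, 0 < w n) (hmono : Monotone w) (n : ℕ) :
    Wfun (wext w) n = ∑ k ∈ Finset.range n, (w k)⁻¹ := by
  have hint := intInt (wext_mono hmono) (wext_pos hpos)
  have key : ∀ k : ℕ, (∫ u in (k:ℝ)..((k:ℝ)+1), (wext w u)⁻¹) = (w k)⁻¹ := by
    intro k
    have hae : ∀ᵐ u : ℝ, u ∈ Set.uIoc (k:ℝ) ((k:ℝ)+1) → (wext w u)⁻¹ = (w k)⁻¹ := by
      filter_upwards [compl_mem_ae_iff.2 (measure_singleton ((k:ℝ)+1))] with u hu hmem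
      rw [Set.uIoc_of_le (by linarith)] at hmem
      have hu1 : (k:ℝ) < u := hmem.1
      have hu2 : u < (k:ℝ) + 1 := lt_of_le_of_ne hmem.2 hu
      have : ⌊u⌋₊ = k := by
        rw [Nat.floor_eq_iff (le_trans (Nat.cast_nonneg k) hu1.le)]
        exact ⟨hu1.le, by exact_mod_cast hu2⟩
      simp [wext, this]
    rw [intervalIntegral.integral_congr_ae hae]
    simp
  have := intervalIntegral.sum_integral_adjacent_intervals (μ := volume)
    (f := fun u => (wext w u)⁻¹) (a := fun k : ℕ => (k:ℝ)) (n := n)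
    (fun k _ => hint _ _)
  unfold Wfun
  simp only [Nat.cast_zero, Nat.cast_add, Nat.cast_one] at this
  rw [← this]
  exact Finset.sum_congr rfl fun k _ => key k

lemma Wtop {w : ℕ → ℝ} (hpos : ∀ n, 0 < w n) (hmono : Monotone w)
    (hdiv : ¬ Summable (fun n : ℕ => (w n)⁻¹)) (C : ℝ) :
    ∃ n : ℕ, C ≤ Wfun (wext w) n := by
  have h := (not_summable_iff_tendsto_nat_atTop_of_nonneg
    (fun n => (inv_pos.mpr (hpos n)).le)).1 hdiv
  obtain ⟨n, hn⟩ := (h.eventually_ge_atTop C).exists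
  exact ⟨n, by rwa [Wsum hpos hmono]⟩

lemma core {w : ℕ → ℝ} (hpos : ∀ n, 0 < w n) (hmono : Monotone w)
    (hdiv : ¬ Summable (fun n : ℕ => (w n)⁻¹))
    {Winv : ℝ → ℝ}
    (hWinv : ∀ t : ℝ, 0 ≤ t → Winv (Wfun (wext w) t) = t)
    (hWinv' : ∀ y : ℝ, 0 ≤ y → Wfun (wext w) (Winv y) = y)
    {α : ℝ} (hα : 0 < α) (hIa : Ia (wext w) Winv α < ⊤)
    {c : ℝ} (hc0 : 0 < c) (hc : c * α < 1) :
    ∀ᶠ z : ℝ in atTop, c ≤ wext w z / z := by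
  have hv : Monotone (wext w) := wext_mono hmono
  have hvpos : ∀ x, 0 < wext w x := wext_pos hpos
  set v := wext w with hvdef
  have hWnn : ∀ x : ℝ, 0 ≤ x → 0 ≤ Wfun v x := fun x hx => by
    have h := (Wsmono hv hvpos).monotone hx
    rwa [W0] at h
  set G : ℝ → ℝ := fun x => (v (Winv (Wfun v (max x 0) + α)))⁻¹ with hG
  have hGanti : Antitone G := by
    intro a b hab
    dsimp only [G]
    refine inv_anti₀ (hvpos _) (hv (Winv_mono_s9 hv hvpos hWinv'
      (add_nonneg (hWnn _ (le_max_right a 0)) hα.le) ?_))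
    have h := (Wsmono hv hvpos).monotone (max_le_max hab (le_refl (0:ℝ)))
    linarith
  have hGpos : ∀ x, 0 < G x := fun x => inv_pos.mpr (hvpos _)
  set F : ℝ → ℝ≥0∞ := fun x => ENNReal.ofReal (G x) with hF
  have hFmeas : Measurable F := hGanti.measurable.ennreal_ofReal
  have hIa' : ∫⁻ x in Ioi (0:ℝ), F x < ⊤ := by
    have heq : ∫⁻ x in Ioi (0:ℝ), F x = Ia v Winv α := by
      unfold Ia
      apply lintegral_congr_ae
      filter_upwards [ae_restrict_mem measurableSet_Ioi] with x hx
      simp only [F, G, max_eq_left (le_of_lt (mem_Ioi.mp hx))]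
    rw [heq]; exact hIa
  set ν : Measure ℝ := volume.withDensity F with hνdef
  have hνs : ∀ s : Set ℝ, MeasurableSet s → ν s = ∫⁻ x in s, F x :=
    fun s hs => withDensity_apply F hs
  have hνIoi0 : ν (Ioi 0) < ⊤ := by rw [hνs _ measurableSet_Ioi]; exact hIa'
  have htail : Tendsto (fun n : ℕ => ν (Ioi (n:ℝ))) atTop (𝓝 0) := by
    have hInter : (⋂ n : ℕ, Ioi ((n:ℕ):ℝ)) = (∅ : Set ℝ) := by
      ext x
      simp only [mem_iInter, mem_Ioi, mem_empty_iff_false, iff_false]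
      push_neg
      obtain ⟨n, hn⟩ := exists_nat_gt x
      exact ⟨n, hn.le⟩
    have h := tendsto_measure_iInter_atTop (μ := ν) (s := fun n : ℕ => Ioi ((n:ℕ):ℝ))
      (fun _ => measurableSet_Ioi.nullMeasurableSet)
      (fun m n hmn => Ioi_subset_Ioi (by exact_mod_cast hmn))
      ⟨0, by simpa using hνIoi0.ne⟩
    rw [hInter] at h
    simpa [Function.comp_def] using h
  have hkey : ∀ t : ℝ, 0 < t → F t * ENNReal.ofReal (t/2) ≤ ν (Ioi (t/2)) := by
    intro t ht
    refine le_trans ?_ (measure_mono (Set.Ioc_subset_Ioi_self : Ioc (t/2) t ⊆ Ioi (t/2)))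
    rw [hνs _ measurableSet_Ioc]
    have h3 : (∫⁻ _ in Ioc (t/2) t, F t) ≤ ∫⁻ x in Ioc (t/2) t, F x :=
      setLIntegral_mono hFmeas (fun x hx => ENNReal.ofReal_le_ofReal (hGanti hx.2))
    refine le_trans (le_of_eq ?_) h3
    rw [setLIntegral_const, Real.volume_Ioc, sub_half]
  set M := c / (1 - c*α) with hMdef
  have hM : 0 < M := div_pos hc0 (by linarith)
  obtain ⟨N, hN⟩ : ∃ N : ℕ, ν (Ioi ((N:ℕ):ℝ)) < ENNReal.ofReal (1/(2*M)) := by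
    have h := htail.eventually_lt_const
      (u := ENNReal.ofReal (1/(2*M))) (ENNReal.ofReal_pos.mpr (by positivity))
    exact h.exists
  have hbound : ∀ t : ℝ, 2*(N:ℝ) + 2 ≤ t → t * G t ≤ 1/M := by
    intro t ht
    have hN0 : (0:ℝ) ≤ (N:ℝ) := Nat.cast_nonneg N
    have ht0 : 0 < t := by linarith
    have hIoi : Ioi (t/2) ⊆ Ioi ((N:ℕ):ℝ) := Ioi_subset_Ioi (by linarith)
    have h := (hkey t ht0).trans ((measure_mono hIoi).trans hN.le)
    rw [← ENNReal.ofReal_mul (hGpos t).le] at h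
    have h2 : G t * (t/2) ≤ 1/(2*M) :=
      (ENNReal.ofReal_le_ofReal_iff (by positivity)).1 h
    have h3 : 2 * (1/(2*M)) = 1/M := by field_simp
    calc t * G t = 2 * (G t * (t/2)) := by ring
      _ ≤ 2 * (1/(2*M)) := by linarith
      _ = 1/M := h3
  obtain ⟨n0, hn0⟩ := Wtop hpos hmono hdiv (Wfun v (2*(N:ℝ)+2) + α)
  filter_upwards [eventually_ge_atTop ((n0:ℕ):ℝ), eventually_gt_atTop (0:ℝ)] with z hz hz0
  have hWz : Wfun v (2*(N:ℝ)+2) + α ≤ Wfun v z :=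
    hn0.trans ((Wsmono hv hvpos).monotone hz)
  have hyz : 0 ≤ Wfun v z - α := by
    have := hWnn (2*(N:ℝ)+2) (by positivity)
    linarith
  set x := Winv (Wfun v z - α) with hxdef
  have hWx : Wfun v x = Wfun v z - α := hWinv' _ hyz
  have hx0 : 0 ≤ x := Winv_nonneg_s9 hv hvpos hWinv' hyz
  have hxge : 2*(N:ℝ) + 2 ≤ x := by
    by_contra hcon
    push_neg at hcon
    have h := Wsmono hv hvpos hcon
    rw [hWx] at h
    linarith
  have hGx : G x = (v z)⁻¹ := by
    dsimp only [G]
    rw [max_eq_left hx0, hWx, sub_add_cancel, hWinv z hz0.le]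
  have hchain : z - x ≤ α * v z := by
    rcases le_or_gt x z with h | h
    · have h2 := Wlb hv hvpos h
      rw [hWx] at h2
      have h3 : (z - x) * (v z)⁻¹ ≤ α := by linarith
      calc z - x = (z - x) * (v z)⁻¹ * v z :=
            (inv_mul_cancel_right₀ (hvpos z).ne' (z - x)).symm
        _ ≤ α * v z := mul_le_mul_of_nonneg_right h3 (hvpos z).le
    · nlinarith [mul_pos hα (hvpos z)]
  have hxle : x ≤ (1/M) * v z := by
    have hb := hbound x hxge
    rw [hGx] at hb
    calc x = x * (v z)⁻¹ * v z := (inv_mul_cancel_right₀ (hvpos z).ne' x).symm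
      _ ≤ (1/M) * v z := mul_le_mul_of_nonneg_right hb (hvpos z).le
  rw [le_div_iff₀ hz0]
  have h1M : (1/M) * v z = v z * (1 - c*α) / c := by
    rw [hMdef, one_div_div]
    ring
  have hfin : z ≤ v z * (1 - c*α) / c + α * v z := by
    rw [← h1M]; linarith
  have hexp : c * (v z * (1 - c*α) / c + α * v z) = v z := by
    field_simp
    ring
  calc c * z ≤ c * (v z * (1 - c*α) / c + α * v z) :=
        mul_le_mul_of_nonneg_left hfin hc0.le
    _ = v z := hexp

/-- `liminf_{x→∞} w(x)/x ≥ 1/α_c(w)` (in `[0,∞]`); in particular, if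
`α_c(w) < ∞` then `∑ 1/w(n)² < ∞`, and if `α_c(w) = 0` then `w(x)/x → ∞`. -/
theorem stmt9 (w : ℕ → ℝ) (hpos : ∀ n, 0 < w n) (hmono : Monotone w)
    (hdiv : ¬ Summable (fun n : ℕ => (w n)⁻¹))
    (Winv : ℝ → ℝ)
    (hWinv : ∀ t : ℝ, 0 ≤ t → Winv (Wfun (wext w) t) = t)
    (hWinv' : ∀ y : ℝ, 0 ≤ y → Wfun (wext w) (Winv y) = y) :
    (alphac (wext w) Winv)⁻¹
        ≤ Filter.liminf (fun x : ℝ => ENNReal.ofReal (wext w x / x)) atTop ∧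
    (alphac (wext w) Winv < ⊤ → Summable (fun n : ℕ => ((w n) ^ 2)⁻¹)) ∧
    (alphac (wext w) Winv = 0 →
        Tendsto (fun x : ℝ => wext w x / x) atTop atTop) := by
  set L := Filter.liminf (fun x : ℝ => ENNReal.ofReal (wext w x / x)) atTop with hL
  have key : ∀ α : ℝ, 0 < α → Ia (wext w) Winv α < ⊤ → (ENNReal.ofReal α)⁻¹ ≤ L := by
    intro α hα hIα
    rw [← ENNReal.ofReal_inv_of_pos hα]
    have hev : ∀ c : ℝ, c ∈ Ioo 0 α⁻¹ → ENNReal.ofReal c ≤ L := by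
      intro c hc
      have hc1 : c * α < 1 := by
        have h := mul_lt_mul_of_pos_right hc.2 hα
        rwa [inv_mul_cancel₀ hα.ne'] at h
      refine le_liminf_of_le (by isBoundedDefault) ?_
      filter_upwards [core hpos hmono hdiv hWinv hWinv' hα hIα hc.1 hc1] with z hz
      exact ENNReal.ofReal_le_ofReal hz
    have htend : Tendsto (fun c : ℝ => ENNReal.ofReal c) (𝓝[<] α⁻¹)
        (𝓝 (ENNReal.ofReal α⁻¹)) :=
      (ENNReal.continuous_ofReal.tendsto _).mono_left nhdsWithin_le_nhds
    refine le_of_tendsto htend ?_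
    filter_upwards [Ioo_mem_nhdsLT_of_mem (a := (0:ℝ)) ⟨inv_pos.mpr hα, le_refl _⟩] with c hc
    exact hev c hc
  have h1 : (alphac (wext w) Winv)⁻¹ ≤ L := by
    rw [ENNReal.inv_le_iff_inv_le]
    refine le_sInf ?_
    rintro b ⟨α, ⟨hα, hIα⟩, rfl⟩
    rw [← ENNReal.inv_le_iff_inv_le]
    exact key α hα hIα
  refine ⟨h1, ?_, ?_⟩
  · intro hfin
    have hac0 : 0 < (alphac (wext w) Winv)⁻¹ := ENNReal.inv_pos.mpr hfin.ne
    set ε := (min ((alphac (wext w) Winv)⁻¹) 1) / 2 with hε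
    have hmin0 : (0:ℝ≥0∞) < min ((alphac (wext w) Winv)⁻¹) 1 := lt_min hac0 zero_lt_one
    have hmintop : min ((alphac (wext w) Winv)⁻¹) 1 ≠ ⊤ :=
      ne_top_of_le_ne_top (by simp) (min_le_right _ _)
    have hεpos : 0 < ε := ENNReal.half_pos hmin0.ne'
    have hεtop : ε ≠ ⊤ := by
      refine ne_top_of_le_ne_top hmintop ?_
      exact (ENNReal.half_lt_self hmin0.ne' hmintop).le
    have hεlt : ε < (alphac (wext w) Winv)⁻¹ :=
      lt_of_lt_of_le (ENNReal.half_lt_self hmin0.ne' hmintop) (min_le_left _ _)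
    have hev := eventually_lt_of_lt_liminf (lt_of_lt_of_le hεlt h1)
    set c := ε.toReal with hcdef
    have hc0 : 0 < c := ENNReal.toReal_pos hεpos.ne' hεtop
    have hev2 : ∀ᶠ x : ℝ in atTop, c < wext w x / x := by
      filter_upwards [hev] with x hx
      exact (ENNReal.lt_ofReal_iff_toReal_lt hεtop).1 hx
    obtain ⟨X, hX⟩ := eventually_atTop.1 hev2
    set N := max ⌈X⌉₊ 1 with hN
    rw [← summable_nat_add_iff N]
    have hbound : ∀ n : ℕ, ((w (n + N)) ^ 2)⁻¹ ≤ (c^2)⁻¹ * (((n:ℝ)+1)^2)⁻¹ := by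
      intro n
      have hXn : X ≤ ((n + N : ℕ):ℝ) := by
        refine (Nat.le_ceil X).trans ?_
        exact_mod_cast Nat.le_add_left ⌈X⌉₊ n |>.trans
          (Nat.add_le_add_left (le_max_left _ _) n) |>.trans (le_refl (n + N))
      have h := hX _ hXn
      have hfloor : wext w ((n+N:ℕ):ℝ) = w (n+N) := by
        show w ⌊((n+N:ℕ):ℝ)⌋₊ = w (n+N)
        rw [Nat.floor_natCast]
      have hnN : ((n:ℝ)+1) ≤ ((n+N:ℕ):ℝ) := by
        push_cast
        have h1 : (1:ℝ) ≤ (N:ℝ) := by exact_mod_cast le_max_right ⌈X⌉₊ 1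
        linarith
      have hposN : (0:ℝ) < ((n+N:ℕ):ℝ) := lt_of_lt_of_le (by positivity) hnN
      rw [hfloor, lt_div_iff₀ hposN] at h
      have hw : c * ((n:ℝ)+1) ≤ w (n+N) := by nlinarith
      have hcn : (0:ℝ) < c * ((n:ℝ)+1) := by positivity
      calc ((w (n+N))^2)⁻¹ ≤ ((c*((n:ℝ)+1))^2)⁻¹ := by
            apply inv_anti₀ (by positivity)
            nlinarith
        _ = (c^2)⁻¹ * (((n:ℝ)+1)^2)⁻¹ := by rw [mul_pow, mul_inv]
    refine Summable.of_nonneg_of_le (fun n => by positivity) hbound ?_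
    have hs : Summable (fun n : ℕ => (((n:ℝ)+1)^2)⁻¹) := by
      have h2 := Real.summable_one_div_nat_pow (p := 2) |>.mpr (by norm_num)
      have h3 := (summable_nat_add_iff 1).2 h2
      simpa [one_div] using h3
    exact hs.mul_left _
  · intro h0
    have hLtop : L = ⊤ := by
      rw [h0] at h1
      simpa using top_le_iff.1 (by simpa using h1)
    rw [tendsto_atTop]
    intro b
    have hb : ENNReal.ofReal b < L := by rw [hLtop]; exact ENNReal.ofReal_lt_top
    filter_upwards [eventually_lt_of_lt_liminf hb] with x hx
    exact (ENNReal.ofReal_lt_ofReal_iff'.1 hx).1.le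
end
end
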